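/- Let g(x) = (1 - 2x - √(1-4x))/(2x²) be the generating function of the Catalan numbers C_{n+1} (shifted) and let A(x) = 1/(1-x)². Then g(x)·A(x·g(x)) = 1/(1-4x) as formal power series. -/

import Mathlib

open PowerSeries

/-- Riordan-array identity: if `g = ∑ C_{n+1} xⁿ` (the shifted Catalan generating
function, `g(x) = (1-2x-√(1-4x))/(2x²)`) and `A(x) = 1/(1-x)²`, then
`g(x)·A(x·g(x)) = 1/(1-4x)`. -/
theorem stmt_18 (g : PowerSeries ℚ)
    (hg : ∀ n, PowerSeries.coeff n g = catalan (n + 1)) :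
    g * ((1 - PowerSeries.X * g)⁻¹) ^ 2 = (1 - 4 * PowerSeries.X)⁻¹ := by
  set c : PowerSeries ℚ := 1 + PowerSeries.X * g with hc
  have hcoeff : ∀ n, PowerSeries.coeff n c = catalan n := by
    intro n
    cases n with
    | zero => simp [hc]
    | succ n => simp [hc, hg n]
  have hfe : PowerSeries.X * c ^ 2 = c - 1 := by
    ext n
    cases n with
    | zero => rw [map_sub, hcoeff 0]; simp
    | succ n =>
      rw [PowerSeries.coeff_succ_X_mul, sq, PowerSeries.coeff_mul]
      simp only [map_sub, hcoeff, PowerSeries.coeff_one]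
      rw [catalan_succ' n]
      push_cast
      simp [hcoeff]
  have hXg : PowerSeries.X * g = c - 1 := by rw [hc]; ring
  have hgc : g = c ^ 2 := by
    have : PowerSeries.X * g = PowerSeries.X * c ^ 2 := by rw [hfe, hXg]
    exact mul_left_cancel₀ PowerSeries.X_ne_zero this
  have hkey : (1 - 4 * PowerSeries.X) * g = (1 - PowerSeries.X * g) ^ 2 := by
    rw [hXg, hgc]
    linear_combination (-4 : PowerSeries ℚ) * hfe
  have h1 : PowerSeries.constantCoeff (1 - PowerSeries.X * g) ≠ 0 := by
    simp
  have h2 : PowerSeries.constantCoeff (1 - 4 * PowerSeries.X : PowerSeries ℚ) ≠ 0 := by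
    simp
  rw [PowerSeries.eq_inv_iff_mul_eq_one h2]
  calc g * ((1 - PowerSeries.X * g)⁻¹) ^ 2 * (1 - 4 * PowerSeries.X)
      = ((1 - 4 * PowerSeries.X) * g) * ((1 - PowerSeries.X * g)⁻¹) ^ 2 := by ring
    _ = (1 - PowerSeries.X * g) ^ 2 * ((1 - PowerSeries.X * g)⁻¹) ^ 2 := by rw [hkey]
    _ = ((1 - PowerSeries.X * g) * (1 - PowerSeries.X * g)⁻¹) ^ 2 := by ring
    _ = 1 := by rw [PowerSeries.mul_inv_cancel _ h1]; norm_num
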